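/- Large deviations limit for the Gilbert–Varshamov bound: let s_1,…,s_σ ≥ 2 be integers, a_1,…,a_σ > 0 with ∑ a_i = 1, and μ ∈ (0,1). For each n let l_1^{(n)},…,l_σ^{(n)} ∈ ℕ with ∑_i l_i^{(n)} = n and l_i^{(n)}/n → a_i, let b_n, r_n be the corresponding block and cost functions, and let T_n ∈ ℕ with T_n/n → μ. Then lim_{n→∞} (1/n) log ( ∑_{x ∈ {0,1}^n with S(x) ≤ T_n} ∏_{j=1}^n r_n(x_j, j) ) = sup { ∑_{i=1}^σ a_i ( θ_i log(s_i − 1) + H(θ_i) ) : θ ∈ (0,1)^σ, ∑_{i=1}^σ a_i θ_i ≤ μ }. -/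

import Mathlib

open Finset Real Filter Nat

/-- The entropy function `H(θ) = -θ log θ - (1-θ) log(1-θ)`. -/
noncomputable def Hent (θ : ℝ) : ℝ := -θ * Real.log θ - (1 - θ) * Real.log (1 - θ)


-- Fenchel inequality
lemma key1 {c θ : ℝ} (hc : 0 < c) (h0 : 0 < θ) (h1 : θ < 1) :
    θ * Real.log c + Hent θ ≤ Real.log (1 + c) := by
  have h1' : 0 < 1 - θ := by linarith
  have hcon := (strictConcaveOn_log_Ioi.concaveOn).2 (x := c / θ) (y := 1 / (1 - θ))
      (Set.mem_Ioi.mpr (by positivity)) (Set.mem_Ioi.mpr (by positivity))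
      h0.le h1'.le (by ring)
  simp only [smul_eq_mul] at hcon
  have e1 : θ * (c / θ) + (1 - θ) * (1 / (1 - θ)) = c + 1 := by field_simp
  rw [e1] at hcon
  have e2 : θ * Real.log (c / θ) + (1 - θ) * Real.log (1 / (1 - θ))
      = θ * Real.log c + Hent θ := by
    rw [Real.log_div (by positivity) (by positivity), Real.log_div (by norm_num) (by positivity)]
    simp [Hent]; ring
  rw [e2] at hcon
  simpa [add_comm] using hcon

lemma key2 {c θ : ℝ} (hc : 0 < c) (hθ : θ = c / (1 + c)) :
    θ * Real.log c + Hent θ = Real.log (1 + c) := by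
  have h1c : (0:ℝ) < 1 + c := by linarith
  have h0 : 0 < θ := by rw [hθ]; positivity
  have h1' : 1 - θ = 1 / (1 + c) := by rw [hθ]; field_simp; ring
  have h1pos : 0 < 1 - θ := by rw [h1']; positivity
  have hcθ : c = θ / (1 - θ) := by rw [h1', hθ]; field_simp
  have hlc : Real.log c = Real.log θ - Real.log (1 - θ) := by
    rw [hcθ, Real.log_div (ne_of_gt h0) (ne_of_gt h1pos)]
  have hl1 : Real.log (1 - θ) = -Real.log (1 + c) := by
    rw [h1', Real.log_div (by norm_num) (ne_of_gt h1c), Real.log_one]; ring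
  rw [hlc, Hent, hl1]; ring


lemma aux_pow1 (n : ℕ) (hn : 1 ≤ n) : ((n:ℝ) + 1)^n ≤ (n:ℝ)^n * Real.exp 1 := by
  have hn0 : (0:ℝ) < n := by exact_mod_cast hn
  have h1 : (n:ℝ) + 1 ≤ (n:ℝ) * Real.exp (1/n) := by
    calc (n:ℝ) + 1 = (n:ℝ) * (1/n + 1) := by field_simp; ring
    _ ≤ (n:ℝ) * Real.exp (1/n) := by nlinarith [Real.add_one_le_exp (1/(n:ℝ))]
  calc ((n:ℝ)+1)^n ≤ ((n:ℝ) * Real.exp (1/n))^n := by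
        apply pow_le_pow_left₀ (by positivity) h1
    _ = (n:ℝ)^n * Real.exp (1/n)^n := mul_pow _ _ _
    _ = (n:ℝ)^n * Real.exp 1 := by
        rw [← Real.exp_nat_mul]; congr 1; field_simp

lemma aux_pow2 (n : ℕ) (hn : 1 ≤ n) : Real.exp 1 * (n:ℝ)^(n+1) ≤ ((n:ℝ)+1)^(n+1) := by
  have hn0 : (0:ℝ) < n := by exact_mod_cast hn
  have h1 : (n:ℝ) * Real.exp (1/((n:ℝ)+1)) ≤ (n:ℝ) + 1 := by
    have h2 := Real.add_one_le_exp (-(1/((n:ℝ)+1)))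
    have h3 : -(1/((n:ℝ)+1)) + 1 = (n:ℝ)/((n:ℝ)+1) := by field_simp; ring
    rw [h3] at h2
    have h4 : Real.exp (1/((n:ℝ)+1)) = (Real.exp (-(1/((n:ℝ)+1))))⁻¹ := by
      rw [← Real.exp_neg]; ring_nf
    rw [h4, mul_inv_le_iff₀ (Real.exp_pos _)]
    calc (n:ℝ) = ((n:ℝ)/((n:ℝ)+1)) * ((n:ℝ)+1) := by field_simp
    _ ≤ Real.exp (-(1/((n:ℝ)+1))) * ((n:ℝ)+1) := by nlinarith
    _ = ((n:ℝ)+1) * Real.exp (-(1/((n:ℝ)+1))) := by ring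
  calc Real.exp 1 * (n:ℝ)^(n+1) = ((n:ℝ) * Real.exp (1/((n:ℝ)+1)))^(n+1) := by
        rw [mul_pow, ← Real.exp_nat_mul]
        have h5 : ((n:ℝ)+1) * (1/((n:ℝ)+1)) = 1 := by field_simp
        push_cast
        rw [h5]; ring
    _ ≤ ((n:ℝ)+1)^(n+1) := pow_le_pow_left₀ (by positivity) h1 _

lemma fact_low (n : ℕ) : (n:ℝ)^n ≤ (n ! : ℝ) * Real.exp n := by
  induction n with
  | zero => simp
  | succ n ih =>
    rcases Nat.eq_zero_or_pos n with h | h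
    · subst h
      norm_num
      try nlinarith [Real.add_one_le_exp (1:ℝ)]
    · push_cast
      calc ((n:ℝ)+1)^(n+1) = ((n:ℝ)+1) * ((n:ℝ)+1)^n := by ring
      _ ≤ ((n:ℝ)+1) * ((n:ℝ)^n * Real.exp 1) := by
          exact mul_le_mul_of_nonneg_left (aux_pow1 n h) (by positivity)
      _ ≤ ((n:ℝ)+1) * (((n ! : ℝ)) * Real.exp n * Real.exp 1) := by
          have := mul_le_mul_of_nonneg_right ih (Real.exp_pos 1).le
          exact mul_le_mul_of_nonneg_left this (by positivity)
      _ = (((n:ℝ)+1) * (n ! : ℝ)) * Real.exp ((n:ℝ)+1) := by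
          rw [Real.exp_add]; ring
      _ = ((n+1)! : ℝ) * Real.exp ((n:ℝ)+1) := by
          rw [Nat.factorial_succ]; push_cast; ring

lemma fact_up (n : ℕ) (hn : 1 ≤ n) : (n ! : ℝ) * Real.exp n ≤ Real.exp 1 * (n:ℝ) * (n:ℝ)^n := by
  induction n with
  | zero => omega
  | succ n ih =>
    rcases Nat.eq_zero_or_pos n with h | h
    · subst h; norm_num
    · have ih' := ih h
      have hn0 : (0:ℝ) < n := by exact_mod_cast h
      have h2 := aux_pow2 n h
      push_cast
      calc ((n+1)! : ℝ) * Real.exp ((n:ℝ)+1)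
          = ((n:ℝ)+1) * ((n ! :ℝ) * Real.exp n) * Real.exp 1 := by
            rw [Nat.factorial_succ, Real.exp_add]; push_cast; ring
      _ ≤ ((n:ℝ)+1) * (Real.exp 1 * (n:ℝ) * (n:ℝ)^n) * Real.exp 1 := by
            have := mul_le_mul_of_nonneg_right ih' (Real.exp_pos 1).le
            exact mul_le_mul_of_nonneg_right (mul_le_mul_of_nonneg_left ih' (by positivity)) (Real.exp_pos 1).le
      _ = (Real.exp 1 * (n:ℝ)^(n+1)) * (((n:ℝ)+1) * Real.exp 1) := by ring
      _ ≤ (((n:ℝ)+1)^(n+1)) * (((n:ℝ)+1) * Real.exp 1) := by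
            exact mul_le_mul_of_nonneg_right h2 (by positivity)
      _ = Real.exp 1 * ((n:ℝ)+1) * ((n:ℝ)+1)^(n+1) := by ring


lemma hent_eq (m k : ℕ) (h0 : 0 < k) (hk : k < m) :
    (m:ℝ) * Hent ((k:ℝ)/m) =
      (m:ℝ) * Real.log m - (k:ℝ) * Real.log k - ((m:ℝ)-(k:ℝ)) * Real.log ((m:ℝ)-(k:ℝ)) := by
  have hM : (0:ℝ) < m := by exact_mod_cast h0.trans hk
  have hK : (0:ℝ) < k := by exact_mod_cast h0
  have hD : (0:ℝ) < (m:ℝ) - k := by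
    have : (k:ℝ) < m := by exact_mod_cast hk
    linarith
  have l2 : 1 - (k:ℝ)/m = ((m:ℝ)-k)/m := by field_simp
  rw [Hent, Real.log_div (ne_of_gt hK) (ne_of_gt hM), l2,
    Real.log_div (ne_of_gt hD) (ne_of_gt hM)]
  field_simp
  ring

lemma log_choose_ge (m k : ℕ) (h0 : 0 < k) (hk : k < m) :
    (m:ℝ) * Hent ((k:ℝ)/m) - (2 + Real.log k + Real.log ((m:ℝ)-k))
      ≤ Real.log (m.choose k) := by
  have hkm : k ≤ m := hk.le
  have hM : (0:ℝ) < m := by exact_mod_cast h0.trans hk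
  have hK : (0:ℝ) < k := by exact_mod_cast h0
  have hd : 1 ≤ m - k := by omega
  have hDcast : ((m - k : ℕ) : ℝ) = (m:ℝ) - k := by
    push_cast [hkm]; ring
  have hD : (0:ℝ) < (m:ℝ) - k := by
    rw [← hDcast]; exact_mod_cast hd
  set d : ℕ := m - k with hdd
  have hCpos : (0:ℝ) < (m.choose k : ℝ) := by
    exact_mod_cast Nat.choose_pos hkm
  -- main exp-scale inequality
  have hfact : (m.choose k : ℝ) * (k ! : ℝ) * (d ! : ℝ) = (m ! : ℝ) := by
    exact_mod_cast congrArg (Nat.cast : ℕ → ℝ) (Nat.choose_mul_factorial_mul_factorial hkm)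
  have h1 : (m:ℝ)^m ≤ (m ! : ℝ) * Real.exp m := fact_low m
  have h2 : (k ! : ℝ) * Real.exp k ≤ Real.exp 1 * (k:ℝ) * (k:ℝ)^k := fact_up k h0
  have h3 : (d ! : ℝ) * Real.exp d ≤ Real.exp 1 * (d:ℝ) * (d:ℝ)^d := fact_up d hd
  have hmain : (m:ℝ)^m ≤
      Real.exp 2 * (k:ℝ) * ((m:ℝ)-k) * (m.choose k : ℝ) * (k:ℝ)^k * ((m:ℝ)-k)^d := by
    have hed : Real.exp k * Real.exp d = Real.exp m := by
      rw [← Real.exp_add]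
      congr 1
      rw [hdd]
      push_cast [hkm]
      ring
    have he2 : Real.exp 1 * Real.exp 1 = Real.exp 2 := by
      rw [← Real.exp_add]; norm_num
    have hfl : (m ! : ℝ) * Real.exp m =
        (m.choose k : ℝ) * ((k ! : ℝ) * Real.exp k) * ((d ! : ℝ) * Real.exp d) := by
      rw [← hed, ← hfact]; ring
    calc (m:ℝ)^m ≤ (m ! : ℝ) * Real.exp m := h1
      _ = (m.choose k : ℝ) * ((k ! : ℝ) * Real.exp k) * ((d ! : ℝ) * Real.exp d) := hfl
      _ ≤ (m.choose k : ℝ) * (Real.exp 1 * (k:ℝ) * (k:ℝ)^k) * (Real.exp 1 * (d:ℝ) * (d:ℝ)^d) := by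
          apply mul_le_mul
          · exact mul_le_mul_of_nonneg_left h2 hCpos.le
          · exact h3
          · positivity
          · positivity
      _ = Real.exp 2 * (k:ℝ) * ((m:ℝ)-k) * (m.choose k : ℝ) * (k:ℝ)^k * ((m:ℝ)-k)^d := by
          rw [← he2, ← hDcast]; ring
  -- take logs
  have hlog := Real.log_le_log (by positivity) hmain
  rw [Real.log_pow] at hlog
  rw [Real.log_mul (by positivity) (by positivity), Real.log_mul (by positivity) (by positivity),
    Real.log_mul (by positivity) (by positivity), Real.log_mul (by positivity) (by positivity),
    Real.log_mul (by positivity) (by positivity), Real.log_pow, Real.log_pow, Real.log_exp]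
    at hlog
  rw [hent_eq m k h0 hk]
  rw [hDcast] at hlog
  linarith


section Comb
variable {σ : ℕ} (n : ℕ) (lv : Fin σ → ℕ) (bv : ℕ → Fin σ)
  (hl : ∑ i, lv i = n)
  (hb : ∀ j < n, ∀ i : Fin σ, bv j = i ↔
      (∑ k ∈ univ.filter (fun k => k < i), lv k) ≤ j ∧
        j < (∑ k ∈ univ.filter (fun k => k < i), lv k) + lv i)

include hl hb in
lemma fiber_card (i : Fin σ) :
    (univ.filter (fun j : Fin n => bv j.val = i)).card = lv i := by
  set P : ℕ := ∑ k ∈ univ.filter (fun k => k < i), lv k with hP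
  have hPle : P + lv i ≤ n := by
    have h1 : insert i (univ.filter (fun k => k < i)) ⊆ univ := subset_univ _
    have h2 : i ∉ univ.filter (fun k => k < i) := by simp
    have h3 : ∑ k ∈ insert i (univ.filter (fun k => k < i)), lv k = lv i + P :=
      Finset.sum_insert h2
    have h4 : ∑ k ∈ insert i (univ.filter (fun k => k < i)), lv k ≤ ∑ k, lv k :=
      Finset.sum_le_sum_of_subset h1
    omega
  have hcard : (univ.filter (fun j : Fin n => bv j.val = i)).card
      = (Finset.Ico P (P + lv i)).card := by
    apply Finset.card_bij (fun j _ => (j : Fin n).val)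
    · intro j hj
      simp only [mem_filter, mem_univ, true_and] at hj
      have := (hb j.val j.isLt i).mp hj
      simp only [Finset.mem_Ico]
      exact this
    · intro j₁ h₁ j₂ h₂ hval
      exact Fin.val_injective hval
    · intro x hx
      simp only [Finset.mem_Ico] at hx
      have hxn : x < n := lt_of_lt_of_le hx.2 hPle
      refine ⟨⟨x, hxn⟩, ?_, rfl⟩
      simp only [mem_filter, mem_univ, true_and]
      exact (hb x hxn i).mpr hx
  rw [hcard, Nat.card_Ico]
  omega

include hl hb in
lemma prod_fiber {M : Type*} [CommMonoid M] (f : Fin σ → M) :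
    ∏ j : Fin n, f (bv j.val) = ∏ i, f i ^ (lv i) := by
  rw [← Finset.prod_fiberwise univ (fun j : Fin n => bv j.val) (fun j => f (bv j.val))]
  apply Finset.prod_congr rfl
  intro i _
  rw [← fiber_card n lv bv hl hb i]
  apply Finset.prod_congr rfl ?_ |>.trans (Finset.prod_const (f i))
  intro j hj
  simp only [mem_filter] at hj
  rw [hj.2]

end Comb

section Bounds
variable {σ : ℕ} (n : ℕ) (lv : Fin σ → ℕ) (bv : ℕ → Fin σ)
  (hl : ∑ i, lv i = n)
  (hb : ∀ j < n, ∀ i : Fin σ, bv j = i ↔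
      (∑ k ∈ univ.filter (fun k => k < i), lv k) ≤ j ∧
        j < (∑ k ∈ univ.filter (fun k => k < i), lv k) + lv i)
  (s : Fin σ → ℕ) (hs : ∀ i, 2 ≤ s i) (Tn : ℕ)

include hl hb hs in
lemma sum_upper (lam : ℝ) (hlam : 0 ≤ lam) :
    (∑ x ∈ univ.filter (fun x : Fin n → Bool =>
        (∑ j, if x j then 1 else 0) ≤ Tn),
      ∏ j : Fin n, (if x j then (s (bv j.val) : ℝ) - 1 else 1))
    ≤ Real.exp (lam * Tn) * ∏ i, (1 + ((s i : ℝ) - 1) * Real.exp (-lam)) ^ (lv i) := by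
  set c : Fin σ → ℝ := fun i => ((s i : ℝ) - 1) * Real.exp (-lam) with hc
  have hc0 : ∀ i, 0 ≤ c i := fun i => by
    have : (2:ℝ) ≤ s i := by exact_mod_cast hs i
    have := Real.exp_pos (-lam)
    simp only [hc]; nlinarith
  have key : ∀ x : Fin n → Bool,
      (∏ j : Fin n, (if x j then (s (bv j.val) : ℝ) - 1 else 1))
      = (∏ j : Fin n, (if x j then c (bv j.val) else 1))
        * Real.exp (lam * ((∑ j, if x j then 1 else 0 : ℕ) : ℝ)) := by
    intro x
    have hcast : ((∑ j, if x j then 1 else 0 : ℕ) : ℝ) = ∑ j, (if x j then (1:ℝ) else 0) := by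
      push_cast; rfl
    rw [hcast, Finset.mul_sum, Real.exp_sum, ← Finset.prod_mul_distrib]
    apply Finset.prod_congr rfl
    intro j _
    cases hxj : x j
    · simp
    · simp only [if_pos, hc, mul_assoc, ← Real.exp_add]
      norm_num
  calc (∑ x ∈ univ.filter (fun x : Fin n → Bool =>
        (∑ j, if x j then 1 else 0) ≤ Tn),
      ∏ j : Fin n, (if x j then (s (bv j.val) : ℝ) - 1 else 1))
      ≤ ∑ x ∈ univ.filter (fun x : Fin n → Bool =>
        (∑ j, if x j then 1 else 0) ≤ Tn),
        Real.exp (lam * Tn) * ∏ j : Fin n, (if x j then c (bv j.val) else 1) := by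
        apply Finset.sum_le_sum
        intro x hx
        simp only [mem_filter, mem_univ, true_and] at hx
        rw [key x, mul_comm]
        apply mul_le_mul_of_nonneg_right
        · apply Real.exp_le_exp.mpr
          apply mul_le_mul_of_nonneg_left _ hlam
          exact_mod_cast hx
        · exact Finset.prod_nonneg fun j _ => by
            cases x j <;> simp [hc0]
    _ ≤ ∑ x : Fin n → Bool,
        Real.exp (lam * Tn) * ∏ j : Fin n, (if x j then c (bv j.val) else 1) := by
        apply Finset.sum_le_sum_of_subset_of_nonneg (Finset.filter_subset _ _)
        intro x _ _
        have : (0:ℝ) ≤ ∏ j : Fin n, (if x j then c (bv j.val) else 1) :=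
          Finset.prod_nonneg fun j _ => by cases x j <;> simp [hc0]
        positivity
    _ = Real.exp (lam * Tn) * ∑ x : Fin n → Bool, ∏ j : Fin n, (if x j then c (bv j.val) else 1) := by
        rw [Finset.mul_sum]
    _ = Real.exp (lam * Tn) * ∏ j : Fin n, (c (bv j.val) + 1) := by
        congr 1
        rw [← Fintype.piFinset_univ,
          ← Finset.prod_univ_sum (fun _ : Fin n => (univ : Finset Bool))
            (fun j b => if b then c (bv j.val) else 1)]
        apply Finset.prod_congr rfl
        intro j _
        simp [add_comm]
    _ = Real.exp (lam * Tn) * ∏ i, (1 + c i) ^ (lv i) := by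
        congr 1
        rw [prod_fiber n lv bv hl hb (fun i => c i + 1)]
        apply Finset.prod_congr rfl
        intro i _
        rw [add_comm]

include hl hb hs in
lemma sum_lower (t : Fin σ → ℕ) (ht : ∀ i, t i ≤ lv i) (htT : ∑ i, t i ≤ Tn) :
    (∏ i, ((lv i).choose (t i) : ℝ) * ((s i : ℝ) - 1) ^ (t i))
    ≤ (∑ x ∈ univ.filter (fun x : Fin n → Bool =>
        (∑ j, if x j then 1 else 0) ≤ Tn),
      ∏ j : Fin n, (if x j then (s (bv j.val) : ℝ) - 1 else 1)) := by
  classical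
  set fib : Fin σ → Finset (Fin n) := fun i => univ.filter (fun j : Fin n => bv j.val = i)
    with hfib
  set D : Finset (Fin σ → Finset (Fin n)) :=
    Fintype.piFinset (fun i => (fib i).powersetCard (t i)) with hD
  set phv : (Fin σ → Finset (Fin n)) → (Fin n → Bool) :=
    fun A j => decide (j ∈ A (bv j.val)) with hphv
  have hmemD : ∀ A ∈ D, ∀ i, A i ⊆ fib i ∧ (A i).card = t i := by
    intro A hA i
    have := Fintype.mem_piFinset.mp hA i
    rw [Finset.mem_powersetCard] at this
    exact this
  -- sum of indicators
  have hScount : ∀ A ∈ D, (∑ j : Fin n, if phv A j then 1 else 0) = ∑ i, t i := by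
    intro A hA
    rw [← Finset.sum_fiberwise univ (fun j : Fin n => bv j.val)
      (fun j => if phv A j then 1 else 0)]
    apply Finset.sum_congr rfl
    intro i _
    have h1 : ∀ j ∈ univ.filter (fun j : Fin n => bv j.val = i),
        (if phv A j then 1 else 0) = (if j ∈ A i then 1 else 0) := by
      intro j hj
      simp only [mem_filter, mem_univ, true_and] at hj
      simp [hphv, hj]
    rw [Finset.sum_congr rfl h1, Finset.sum_boole]
    have h2 : (univ.filter (fun j : Fin n => bv j.val = i)).filter (fun j => j ∈ A i) = A i := by
      apply Finset.Subset.antisymm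
      · intro j hj; exact (Finset.mem_filter.mp hj).2
      · intro j hj
        rw [Finset.mem_filter]
        exact ⟨(hmemD A hA i).1 hj, hj⟩
    rw [h2, (hmemD A hA i).2]
    simp
  -- product value
  have hPval : ∀ A ∈ D, (∏ j : Fin n, (if phv A j then (s (bv j.val) : ℝ) - 1 else 1))
      = ∏ i, ((s i : ℝ) - 1) ^ (t i) := by
    intro A hA
    rw [← Finset.prod_fiberwise univ (fun j : Fin n => bv j.val)
      (fun j => if phv A j then (s (bv j.val) : ℝ) - 1 else 1)]
    apply Finset.prod_congr rfl
    intro i _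
    have h1 : ∀ j ∈ univ.filter (fun j : Fin n => bv j.val = i),
        (if phv A j then (s (bv j.val) : ℝ) - 1 else 1) = (if j ∈ A i then (s i : ℝ) - 1 else 1) := by
      intro j hj
      simp only [mem_filter, mem_univ, true_and] at hj
      simp [hphv, hj]
    rw [Finset.prod_congr rfl h1, Finset.prod_ite_mem]
    have h2 : (univ.filter (fun j : Fin n => bv j.val = i)) ∩ A i = A i := by
      apply Finset.Subset.antisymm
      · exact Finset.inter_subset_right
      · intro j hj
        exact Finset.mem_inter.mpr ⟨(hmemD A hA i).1 hj, hj⟩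
    rw [h2, Finset.prod_const, (hmemD A hA i).2]
  -- injectivity
  have hinj : Set.InjOn phv D := by
    intro A hA A' hA' heq
    funext i
    apply Finset.Subset.antisymm
    · intro j hj
      have hji : bv j.val = i := Finset.mem_filter.mp ((hmemD A hA i).1 hj) |>.2
      have : phv A j = true := by simp [hphv, hji, hj]
      rw [heq] at this
      simp only [hphv, decide_eq_true_eq] at this
      rwa [hji] at this
    · intro j hj
      have hji : bv j.val = i := Finset.mem_filter.mp ((hmemD A' hA' i).1 hj) |>.2
      have : phv A' j = true := by simp [hphv, hji, hj]
      rw [← heq] at this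
      simp only [hphv, decide_eq_true_eq] at this
      rwa [hji] at this
  -- cardinality of D
  have hcardD : D.card = ∏ i, (lv i).choose (t i) := by
    rw [hD, Fintype.card_piFinset]
    apply Finset.prod_congr rfl
    intro i _
    rw [Finset.card_powersetCard, fiber_card n lv bv hl hb i]
  -- image is inside the filter
  have himage : D.image phv ⊆ univ.filter (fun x : Fin n → Bool =>
      (∑ j, if x j then 1 else 0) ≤ Tn) := by
    intro x hx
    obtain ⟨A, hA, rfl⟩ := Finset.mem_image.mp hx
    rw [Finset.mem_filter]
    exact ⟨Finset.mem_univ _, by rw [hScount A hA]; exact htT⟩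
  have hnneg : ∀ x : Fin n → Bool, (0:ℝ) ≤ ∏ j : Fin n, (if x j then (s (bv j.val) : ℝ) - 1 else 1) := by
    intro x
    apply Finset.prod_nonneg
    intro j _
    cases x j <;> simp
    exact le_trans one_le_two (hs _)
  calc (∏ i, ((lv i).choose (t i) : ℝ) * ((s i : ℝ) - 1) ^ (t i))
      = (D.card : ℝ) * ∏ i, ((s i : ℝ) - 1) ^ (t i) := by
        rw [hcardD, Finset.prod_mul_distrib]
        push_cast
        ring
    _ = ∑ A ∈ D, ∏ i, ((s i : ℝ) - 1) ^ (t i) := by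
        rw [Finset.sum_const, nsmul_eq_mul]
    _ = ∑ A ∈ D, ∏ j : Fin n, (if phv A j then (s (bv j.val) : ℝ) - 1 else 1) := by
        exact Finset.sum_congr rfl fun A hA => (hPval A hA).symm
    _ = ∑ x ∈ D.image phv, ∏ j : Fin n, (if x j then (s (bv j.val) : ℝ) - 1 else 1) := by
        rw [Finset.sum_image (fun A hA A' hA' h => hinj hA hA' h)]
    _ ≤ _ := Finset.sum_le_sum_of_subset_of_nonneg himage (fun x _ _ => hnneg x)


lemma hent_contAt {θ : ℝ} (h0 : 0 < θ) (h1 : θ < 1) : ContinuousAt Hent θ := by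
  have c1 : ContinuousAt (fun x : ℝ => -x * Real.log x) θ :=
    (continuousAt_id.neg).mul (Real.continuousAt_log (ne_of_gt h0))
  have c2 : ContinuousAt (fun x : ℝ => (1 - x) * Real.log (1 - x)) θ := by
    have hsub : ContinuousAt (fun x : ℝ => 1 - x) θ := continuousAt_const.sub continuousAt_id
    exact hsub.mul ((Real.continuousAt_log (by simp; linarith)).comp hsub)
  exact c1.sub c2

lemma log_div_nat_tendsto : Tendsto (fun n : ℕ => Real.log n / n) atTop (nhds 0) := by
  have h := Real.isLittleO_log_id_atTop.tendsto_div_nhds_zero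
  exact h.comp tendsto_natCast_atTop_atTop

end Bounds

section Dual
variable (σ : ℕ) (hσ : 1 ≤ σ) (s : Fin σ → ℕ) (hs : ∀ i, 2 ≤ s i)
  (a : Fin σ → ℝ) (ha : ∀ i, 0 < a i) (hsuma : ∑ i, a i = 1)
  (μ : ℝ) (hμ0 : 0 < μ) (hμ1 : μ < 1)

include hσ hs ha hsuma hμ0 hμ1 in
lemma exists_lam : ∃ lam : ℝ, 0 ≤ lam ∧
    (∑ i, a i * (((s i:ℝ)-1) * Real.exp (-lam) / (1 + ((s i:ℝ)-1) * Real.exp (-lam)))) ≤ μ ∧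
    lam * (μ - ∑ i, a i * (((s i:ℝ)-1) * Real.exp (-lam) / (1 + ((s i:ℝ)-1) * Real.exp (-lam)))) = 0 := by
  set g : ℝ → ℝ := fun lam =>
    ∑ i, a i * (((s i:ℝ)-1) * Real.exp (-lam) / (1 + ((s i:ℝ)-1) * Real.exp (-lam))) with hg
  have hs1 : ∀ i, (1:ℝ) ≤ (s i:ℝ) - 1 := by
    intro i
    have : (2:ℝ) ≤ (s i:ℝ) := by exact_mod_cast hs i
    linarith
  have hcpos : ∀ lam : ℝ, ∀ i, 0 < ((s i:ℝ)-1) * Real.exp (-lam) := by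
    intro lam i
    have := hs1 i; have := Real.exp_pos (-lam); nlinarith
  have hgcont : Continuous g := by
    apply continuous_finset_sum
    intro i _
    apply continuous_const.mul
    apply Continuous.div
    · exact continuous_const.mul (Real.continuous_exp.comp continuous_neg)
    · exact continuous_const.add (continuous_const.mul (Real.continuous_exp.comp continuous_neg))
    · intro x
      have := hcpos x i
      intro h; linarith
  have h1c : ∀ lam : ℝ, ∀ i, (0:ℝ) < 1 + ((s i:ℝ)-1) * Real.exp (-lam) := by
    intro lam i; have := hcpos lam i; linarith
  by_cases hg0 : g 0 ≤ μ
  · exact ⟨0, le_refl 0, hg0, by ring⟩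
  · push_neg at hg0
    set Smax : ℝ := ∑ i, a i * ((s i:ℝ) - 1) with hSmax
    have hgub : ∀ lam : ℝ, g lam ≤ Real.exp (-lam) * Smax := by
      intro lam
      rw [hg, hSmax, Finset.mul_sum]
      apply Finset.sum_le_sum
      intro i _
      have h2 : ((s i:ℝ)-1) * Real.exp (-lam) / (1 + ((s i:ℝ)-1) * Real.exp (-lam))
          ≤ ((s i:ℝ)-1) * Real.exp (-lam) :=
        div_le_self (hcpos lam i).le (by have := hcpos lam i; linarith)
      calc a i * (((s i:ℝ)-1) * Real.exp (-lam) / (1 + ((s i:ℝ)-1) * Real.exp (-lam)))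
          ≤ a i * (((s i:ℝ)-1) * Real.exp (-lam)) := mul_le_mul_of_nonneg_left h2 (ha i).le
        _ = Real.exp (-lam) * (a i * ((s i:ℝ)-1)) := by ring
    have hSmax_pos : 0 < Smax := by
      apply Finset.sum_pos
      · intro i _
        have := hs1 i; have := ha i; nlinarith
      · exact ⟨⟨0, hσ⟩, Finset.mem_univ _⟩
    have hμS : μ < Smax := by
      have := hgub 0
      simp only [neg_zero, Real.exp_zero, one_mul] at this
      linarith
    set M : ℝ := Real.log (Smax / μ) + 1 with hM
    have hM0 : 0 ≤ M := by
      have h3 : (1:ℝ) < Smax / μ := (one_lt_div hμ0).mpr hμS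
      have h4 : 0 < Real.log (Smax / μ) := Real.log_pos h3
      rw [hM]; linarith
    have hgM : g M < μ := by
      have h5 : Real.exp (-M) = (μ / Smax) * Real.exp (-1) := by
        rw [hM, neg_add, Real.exp_add]
        congr 1
        rw [Real.exp_neg, Real.exp_log (by positivity)]
        rw [inv_div]
      have h6 : Real.exp (-M) * Smax = μ * Real.exp (-1) := by
        rw [h5]; field_simp
      have h7 : Real.exp (-1 : ℝ) < 1 := by
        rw [Real.exp_lt_one_iff]; norm_num
      calc g M ≤ Real.exp (-M) * Smax := hgub M
        _ = μ * Real.exp (-1) := h6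
        _ < μ * 1 := by nlinarith
        _ = μ := mul_one μ
    have hIVT := intermediate_value_Icc' hM0 hgcont.continuousOn
    have hμmem : μ ∈ Set.Icc (g M) (g 0) := ⟨hgM.le, hg0.le⟩
    obtain ⟨lam, hlam_mem, hglam⟩ := hIVT hμmem
    refine ⟨lam, hlam_mem.1, le_of_eq hglam, ?_⟩
    rw [show (∑ i, a i * (((s i:ℝ)-1) * Real.exp (-lam) / (1 + ((s i:ℝ)-1) * Real.exp (-lam)))) = g lam from rfl, hglam]
    ring

include hs ha in
lemma sup_greatest (lam : ℝ) (hlam0 : 0 ≤ lam)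
    (hgle : (∑ i, a i * (((s i:ℝ)-1) * Real.exp (-lam) / (1 + ((s i:ℝ)-1) * Real.exp (-lam)))) ≤ μ)
    (hcs : lam * (μ - ∑ i, a i * (((s i:ℝ)-1) * Real.exp (-lam) / (1 + ((s i:ℝ)-1) * Real.exp (-lam)))) = 0) :
    IsGreatest {v : ℝ | ∃ θ : Fin σ → ℝ,
        (∀ i, θ i ∈ Set.Ioo (0 : ℝ) 1) ∧ (∑ i, a i * θ i) ≤ μ ∧
        v = ∑ i, a i * (θ i * Real.log ((s i : ℝ) - 1) + Hent (θ i))}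
      (lam * μ + ∑ i, a i * Real.log (1 + ((s i:ℝ)-1) * Real.exp (-lam))) := by
  set c : Fin σ → ℝ := fun i => ((s i:ℝ)-1) * Real.exp (-lam) with hcdef
  have hs1 : ∀ i, (1:ℝ) ≤ (s i:ℝ) - 1 := by
    intro i
    have : (2:ℝ) ≤ (s i:ℝ) := by exact_mod_cast hs i
    linarith
  have hcpos : ∀ i, 0 < c i := by
    intro i
    have := hs1 i; have := Real.exp_pos (-lam)
    simp only [hcdef]; nlinarith
  have hlogc : ∀ i, Real.log (c i) = Real.log ((s i:ℝ)-1) - lam := by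
    intro i
    rw [hcdef]
    simp only
    rw [Real.log_mul (by have := hs1 i; linarith) (Real.exp_ne_zero _), Real.log_exp]
    ring
  set θs : Fin σ → ℝ := fun i => c i / (1 + c i) with hθs
  have hθio : ∀ i, θs i ∈ Set.Ioo (0:ℝ) 1 := by
    intro i
    have hci := hcpos i
    constructor
    · apply div_pos hci; linarith
    · rw [div_lt_one (by linarith)]; linarith
  have hkey : ∀ i, θs i * Real.log ((s i:ℝ)-1) + Hent (θs i)
      = lam * θs i + Real.log (1 + c i) := by
    intro i
    have h2 := key2 (hcpos i) (rfl : θs i = c i / (1 + c i))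
    rw [hlogc i] at h2
    nlinarith [h2]
  have hθsum : (∑ i, a i * θs i)
      = ∑ i, a i * (((s i:ℝ)-1) * Real.exp (-lam) / (1 + ((s i:ℝ)-1) * Real.exp (-lam))) := rfl
  constructor
  · refine ⟨θs, hθio, by rw [hθsum]; exact hgle, ?_⟩
    have : ∀ i, a i * (θs i * Real.log ((s i:ℝ)-1) + Hent (θs i))
        = lam * (a i * θs i) + a i * Real.log (1 + c i) := by
      intro i; rw [hkey i]; ring
    rw [Finset.sum_congr rfl (fun i _ => this i), Finset.sum_add_distrib, ← Finset.mul_sum]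
    rw [hθsum]
    nlinarith [hcs]
  · rintro v ⟨θ, hθ, hθμ, rfl⟩
    have hterm : ∀ i, a i * (θ i * Real.log ((s i:ℝ)-1) + Hent (θ i))
        ≤ lam * (a i * θ i) + a i * Real.log (1 + c i) := by
      intro i
      have h1 := key1 (hcpos i) (hθ i).1 (hθ i).2
      rw [hlogc i] at h1
      have h3 : θ i * Real.log ((s i:ℝ)-1) + Hent (θ i) ≤ lam * θ i + Real.log (1 + c i) := by
        nlinarith [h1]
      calc a i * (θ i * Real.log ((s i:ℝ)-1) + Hent (θ i))
          ≤ a i * (lam * θ i + Real.log (1 + c i)) := mul_le_mul_of_nonneg_left h3 (ha i).le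
        _ = lam * (a i * θ i) + a i * Real.log (1 + c i) := by ring
    calc (∑ i, a i * (θ i * Real.log ((s i:ℝ)-1) + Hent (θ i)))
        ≤ ∑ i, (lam * (a i * θ i) + a i * Real.log (1 + c i)) :=
          Finset.sum_le_sum fun i _ => hterm i
      _ = lam * (∑ i, a i * θ i) + ∑ i, a i * Real.log (1 + c i) := by
          rw [Finset.sum_add_distrib, ← Finset.mul_sum]
      _ ≤ lam * μ + ∑ i, a i * Real.log (1 + c i) := by
          have := mul_le_mul_of_nonneg_left hθμ hlam0
          linarith

end Dual


lemma lower_event (σ : ℕ) (s : Fin σ → ℕ) (hs : ∀ i, 2 ≤ s i)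
    (a : Fin σ → ℝ) (ha : ∀ i, 0 < a i)
    (μ : ℝ)
    (l : ℕ → Fin σ → ℕ) (hl : ∀ n, ∑ i, l n i = n)
    (hla : ∀ i, Filter.Tendsto (fun n => (l n i : ℝ) / n) Filter.atTop (nhds (a i)))
    (b : ℕ → ℕ → Fin σ)
    (hb : ∀ n, ∀ j < n, ∀ i : Fin σ, b n j = i ↔
      (∑ k ∈ univ.filter (fun k => k < i), l n k) ≤ j ∧
        j < (∑ k ∈ univ.filter (fun k => k < i), l n k) + l n i)
    (T : ℕ → ℕ)
    (hT : Filter.Tendsto (fun n => (T n : ℝ) / n) Filter.atTop (nhds μ))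
    (θ' : Fin σ → ℝ) (hθio : ∀ i, θ' i ∈ Set.Ioo (0:ℝ) 1)
    (hθμ : (∑ i, a i * θ' i) < μ)
    (x0 : ℝ) (hx : x0 < ∑ i, a i * (θ' i * Real.log ((s i:ℝ)-1) + Hent (θ' i))) :
    ∀ᶠ n : ℕ in atTop, x0 < (1/(n:ℝ)) * Real.log
        (∑ x ∈ univ.filter (fun x : Fin n → Bool =>
            (∑ j, if x j then 1 else 0) ≤ T n),
          ∏ j : Fin n, (if x j then (s (b n j.val) : ℝ) - 1 else 1)) := by
  classical
  set t : ℕ → Fin σ → ℕ := fun n i => ⌊θ' i * (l n i:ℝ)⌋₊ with htdef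
  -- l n i → ∞
  have hl_inf : ∀ i, Tendsto (fun n => (l n i:ℝ)) atTop atTop := by
    intro i
    have h1 : Tendsto (fun n : ℕ => ((l n i:ℝ)/n) * n) atTop atTop :=
      Filter.Tendsto.pos_mul_atTop (ha i) (hla i) tendsto_natCast_atTop_atTop
    apply h1.congr'
    filter_upwards [eventually_ge_atTop 1] with n hn
    have hn0 : ((n:ℝ)) ≠ 0 := by positivity
    field_simp
  -- t ≤ l
  have htl_le : ∀ n i, t n i ≤ l n i := by
    intro n i
    have h1 : θ' i * (l n i:ℝ) ≤ ((l n i : ℕ) : ℝ) := by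
      have := (hθio i).2
      nlinarith [Nat.cast_nonneg (α := ℝ) (l n i)]
    calc t n i ≤ ⌊((l n i : ℕ):ℝ)⌋₊ := Nat.floor_le_floor h1
      _ = l n i := Nat.floor_natCast _
  -- t/l → θ'
  have hratio : ∀ i, Tendsto (fun n => (t n i:ℝ)/(l n i:ℝ)) atTop (nhds (θ' i)) := by
    intro i
    have hlow : Tendsto (fun n => θ' i - 1/(l n i:ℝ)) atTop (nhds (θ' i)) := by
      have h2 : Tendsto (fun n => 1/(l n i:ℝ)) atTop (nhds 0) := by
        simpa [one_div, Function.comp_def] using tendsto_inv_atTop_zero.comp (hl_inf i)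
      simpa using tendsto_const_nhds.sub h2
    apply tendsto_of_tendsto_of_tendsto_of_le_of_le' hlow
      (tendsto_const_nhds : Tendsto (fun _ : ℕ => θ' i) atTop (nhds (θ' i)))
    · filter_upwards [(hl_inf i).eventually_ge_atTop 1] with n hn
      have hl0 : (0:ℝ) < (l n i:ℝ) := by linarith
      rw [le_div_iff₀ hl0]
      have h3 := Nat.lt_floor_add_one (θ' i * (l n i:ℝ))
      have : (θ' i - 1/(l n i:ℝ)) * (l n i:ℝ) = θ' i * (l n i:ℝ) - 1 := by
        field_simp
      rw [this]
      have h4 : θ' i * (l n i:ℝ) < (t n i : ℝ) + 1 := by exact_mod_cast h3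
      linarith
    · filter_upwards [(hl_inf i).eventually_ge_atTop 1] with n hn
      have hl0 : (0:ℝ) < (l n i:ℝ) := by linarith
      rw [div_le_iff₀ hl0]
      have h5 : (t n i : ℝ) ≤ θ' i * (l n i:ℝ) := by
        apply Nat.floor_le
        have := (hθio i).1; positivity
      linarith [h5]
  -- t/n → a*θ'
  have ht_n : ∀ i, Tendsto (fun n => (t n i:ℝ)/(n:ℝ)) atTop (nhds (a i * θ' i)) := by
    intro i
    have h1 : Tendsto (fun n => ((t n i:ℝ)/(l n i:ℝ)) * ((l n i:ℝ)/(n:ℝ))) atTop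
        (nhds (θ' i * a i)) := (hratio i).mul (hla i)
    have h2 : Tendsto (fun n => ((t n i:ℝ)/(l n i:ℝ)) * ((l n i:ℝ)/(n:ℝ))) atTop
        (nhds (a i * θ' i)) := by rw [mul_comm (a i)]; exact h1
    apply h2.congr'
    filter_upwards [(hl_inf i).eventually_ge_atTop 1] with n hn
    have hl0 : (l n i:ℝ) ≠ 0 := by linarith
    field_simp
  -- sum t ≤ T eventually
  have hsT : ∀ᶠ n : ℕ in atTop, (∑ i, t n i) ≤ T n := by
    have hsumt : Tendsto (fun n : ℕ => ∑ i, (t n i:ℝ)/(n:ℝ)) atTop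
        (nhds (∑ i, a i * θ' i)) := tendsto_finset_sum _ (fun i _ => ht_n i)
    have hdiff : Tendsto (fun n : ℕ => (T n:ℝ)/(n:ℝ) - ∑ i, (t n i:ℝ)/(n:ℝ)) atTop
        (nhds (μ - ∑ i, a i * θ' i)) := hT.sub hsumt
    have hpos : (0:ℝ) < μ - ∑ i, a i * θ' i := by linarith
    filter_upwards [hdiff.eventually_const_lt hpos, eventually_ge_atTop 1] with n h1 h2
    have hn0 : (0:ℝ) < (n:ℝ) := by exact_mod_cast h2
    have h3 : ∑ i, (t n i:ℝ)/(n:ℝ) = (∑ i, (t n i:ℝ))/(n:ℝ) := by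
      rw [Finset.sum_div]
    rw [h3] at h1
    have h4 : ((∑ i, t n i : ℕ):ℝ) = ∑ i, (t n i:ℝ) := by push_cast; rfl
    have h5 : ((∑ i, t n i : ℕ):ℝ) < (T n : ℝ) := by
      rw [h4]
      have := sub_pos.mp (by linarith : (0:ℝ) < (T n:ℝ)/(n:ℝ) - (∑ i, (t n i:ℝ))/(n:ℝ))
      calc (∑ i, (t n i:ℝ)) = ((∑ i, (t n i:ℝ))/(n:ℝ)) * (n:ℝ) := by field_simp
        _ < ((T n:ℝ)/(n:ℝ)) * (n:ℝ) := by
            apply mul_lt_mul_of_pos_right this hn0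
        _ = (T n:ℝ) := by field_simp
    exact_mod_cast h5.le
  -- positivity of t, t < l eventually
  have htpos : ∀ᶠ n : ℕ in atTop, ∀ i, 1 ≤ t n i ∧ t n i < l n i := by
    rw [Filter.eventually_all]
    intro i
    have h1 : Tendsto (fun n => θ' i * (l n i:ℝ)) atTop atTop :=
      (hl_inf i).const_mul_atTop (hθio i).1
    filter_upwards [h1.eventually_ge_atTop 1, (hl_inf i).eventually_ge_atTop 1] with n hn1 hn2
    constructor
    · exact Nat.le_floor (by exact_mod_cast hn1)
    · rw [htdef]
      have h2 : (0:ℝ) ≤ θ' i * (l n i:ℝ) := by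
        have := (hθio i).1; positivity
      rw [Nat.floor_lt h2]
      have := (hθio i).2
      nlinarith
  -- the lower bound sequence v
  set v : ℕ → ℝ := fun n => ∑ i,
      ((l n i:ℝ)/(n:ℝ) * Hent ((t n i:ℝ)/(l n i:ℝ)) + (t n i:ℝ)/(n:ℝ) * Real.log ((s i:ℝ)-1)
        - (2 + Real.log (t n i) + Real.log ((l n i:ℝ) - (t n i:ℝ)))/(n:ℝ)) with hvdef
  have hv_tend : Tendsto v atTop
      (nhds (∑ i, a i * (θ' i * Real.log ((s i:ℝ)-1) + Hent (θ' i)))) := by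
    apply tendsto_finset_sum
    intro i _
    have h1 : Tendsto (fun n => (l n i:ℝ)/(n:ℝ) * Hent ((t n i:ℝ)/(l n i:ℝ))) atTop
        (nhds (a i * Hent (θ' i))) :=
      (hla i).mul (((hent_contAt (hθio i).1 (hθio i).2).tendsto).comp (hratio i))
    have h2 : Tendsto (fun n => (t n i:ℝ)/(n:ℝ) * Real.log ((s i:ℝ)-1)) atTop
        (nhds ((a i * θ' i) * Real.log ((s i:ℝ)-1))) := (ht_n i).mul_const _
    have h3 : Tendsto (fun n : ℕ => (2 + Real.log (t n i) + Real.log ((l n i:ℝ) - (t n i:ℝ)))/(n:ℝ))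
        atTop (nhds 0) := by
      have hb1 : Tendsto (fun n : ℕ => 2/(n:ℝ) + 2 * (Real.log n / n)) atTop (nhds 0) := by
        have e1 : Tendsto (fun n : ℕ => 2/(n:ℝ)) atTop (nhds 0) :=
          tendsto_const_div_atTop_nhds_zero_nat 2
        have e2 := log_div_nat_tendsto.const_mul 2
        simpa using e1.add e2
      apply tendsto_of_tendsto_of_tendsto_of_le_of_le' tendsto_const_nhds hb1
      · filter_upwards [htpos, eventually_ge_atTop 1] with n hn h2'
        obtain ⟨ht1, htl⟩ := hn i
        have hp1 : (1:ℝ) ≤ (t n i:ℝ) := by exact_mod_cast ht1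
        have hp2 : (1:ℝ) ≤ (l n i:ℝ) - (t n i:ℝ) := by
          have : t n i + 1 ≤ l n i := htl
          have := Nat.cast_le (α := ℝ).mpr this
          push_cast at this
          linarith
        have hl1 : 0 ≤ Real.log (t n i) := Real.log_nonneg hp1
        have hl2 : 0 ≤ Real.log ((l n i:ℝ) - (t n i:ℝ)) := Real.log_nonneg hp2
        positivity
      · filter_upwards [htpos, eventually_ge_atTop 1] with n hn h2'
        obtain ⟨ht1, htl⟩ := hn i
        have hn0 : (0:ℝ) < (n:ℝ) := by exact_mod_cast h2'
        have hln : l n i ≤ n :=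
          le_of_le_of_eq (Finset.single_le_sum (fun i _ => Nat.zero_le (l n i)) (Finset.mem_univ i)) (hl n)
        have htn : t n i ≤ n := le_trans (htl_le n i) hln
        have hp1 : (1:ℝ) ≤ (t n i:ℝ) := by exact_mod_cast ht1
        have hlog1 : Real.log (t n i) ≤ Real.log n := by
          apply Real.log_le_log (by linarith)
          exact_mod_cast htn
        have hp2 : (1:ℝ) ≤ (l n i:ℝ) - (t n i:ℝ) := by
          have : t n i + 1 ≤ l n i := htl
          have := Nat.cast_le (α := ℝ).mpr this
          push_cast at this
          linarith
        have hlog2 : Real.log ((l n i:ℝ) - (t n i:ℝ)) ≤ Real.log n := by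
          apply Real.log_le_log (by linarith)
          have h6 : (l n i : ℝ) ≤ (n:ℝ) := by exact_mod_cast hln
          have h7 : (0:ℝ) ≤ (t n i:ℝ) := Nat.cast_nonneg _
          linarith
        rw [div_le_iff₀ hn0]
        have hlogn : 0 ≤ Real.log n := Real.log_nonneg (by exact_mod_cast h2')
        have expand : (2/(n:ℝ) + 2 * (Real.log n / n)) * (n:ℝ) = 2 + 2 * Real.log n := by
          field_simp
        rw [expand]
        linarith
    have := (h1.add h2).sub h3
    convert this using 1
    ring
  -- eventually v n ≤ f n
  have hfv : ∀ᶠ n : ℕ in atTop, v n ≤ (1/(n:ℝ)) * Real.log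
        (∑ x ∈ univ.filter (fun x : Fin n → Bool =>
            (∑ j, if x j then 1 else 0) ≤ T n),
          ∏ j : Fin n, (if x j then (s (b n j.val) : ℝ) - 1 else 1)) := by
    filter_upwards [hsT, htpos, eventually_ge_atTop 1] with n hsTn htn hn1
    have hn0 : (0:ℝ) < (n:ℝ) := by exact_mod_cast hn1
    have hs1 : ∀ i, (1:ℝ) ≤ (s i:ℝ) - 1 := by
      intro i
      have : (2:ℝ) ≤ (s i:ℝ) := by exact_mod_cast hs i
      linarith
    have hfac_pos : ∀ i : Fin σ, (0:ℝ) < ((l n i).choose (t n i) : ℝ) * ((s i:ℝ)-1)^(t n i) := by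
      intro i
      have h1 : 0 < (l n i).choose (t n i) := Nat.choose_pos (htl_le n i)
      have h2 : (0:ℝ) < ((s i:ℝ)-1)^(t n i) := by
        have := hs1 i; positivity
      have h3 : (0:ℝ) < ((l n i).choose (t n i) : ℝ) := by exact_mod_cast h1
      positivity
    have hSlow := sum_lower n (l n) (b n) (hl n) (hb n) s hs (T n) (t n)
      (fun i => htl_le n i) hsTn
    have hprod_pos : (0:ℝ) < ∏ i, ((l n i).choose (t n i) : ℝ) * ((s i:ℝ)-1)^(t n i) :=
      Finset.prod_pos (fun i _ => hfac_pos i)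
    have hlog1 : Real.log (∏ i, ((l n i).choose (t n i) : ℝ) * ((s i:ℝ)-1)^(t n i))
        ≤ Real.log (∑ x ∈ univ.filter (fun x : Fin n → Bool =>
            (∑ j, if x j then 1 else 0) ≤ T n),
          ∏ j : Fin n, (if x j then (s (b n j.val) : ℝ) - 1 else 1)) :=
      Real.log_le_log hprod_pos hSlow
    have hlog2 : Real.log (∏ i, ((l n i).choose (t n i) : ℝ) * ((s i:ℝ)-1)^(t n i))
        = ∑ i, (Real.log ((l n i).choose (t n i) : ℝ) + (t n i:ℝ) * Real.log ((s i:ℝ)-1)) := by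
      rw [Real.log_prod (fun i _ => ne_of_gt (hfac_pos i))]
      apply Finset.sum_congr rfl
      intro i _
      have h1 : (0:ℝ) < ((l n i).choose (t n i) : ℝ) := by
        exact_mod_cast Nat.choose_pos (htl_le n i)
      have h2 : (0:ℝ) < ((s i:ℝ)-1)^(t n i) := by
        have := hs1 i; positivity
      rw [Real.log_mul (ne_of_gt h1) (ne_of_gt h2), Real.log_pow]
    have hlog3 : ∑ i, ((l n i:ℝ) * Hent ((t n i:ℝ)/(l n i:ℝ)) + (t n i:ℝ) * Real.log ((s i:ℝ)-1)
          - (2 + Real.log (t n i) + Real.log ((l n i:ℝ) - (t n i:ℝ))))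
        ≤ ∑ i, (Real.log ((l n i).choose (t n i) : ℝ) + (t n i:ℝ) * Real.log ((s i:ℝ)-1)) := by
      apply Finset.sum_le_sum
      intro i _
      have := log_choose_ge (l n i) (t n i) (by exact (htn i).1) (htn i).2
      linarith
    have hveq : v n = (1/(n:ℝ)) * ∑ i,
        ((l n i:ℝ) * Hent ((t n i:ℝ)/(l n i:ℝ)) + (t n i:ℝ) * Real.log ((s i:ℝ)-1)
          - (2 + Real.log (t n i) + Real.log ((l n i:ℝ) - (t n i:ℝ)))) := by
      rw [hvdef, Finset.mul_sum]
      apply Finset.sum_congr rfl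
      intro i _
      ring
    rw [hveq]
    apply mul_le_mul_of_nonneg_left _ (by positivity)
    linarith
  filter_upwards [hfv, hv_tend.eventually_const_lt hx] with n h1 h2
  exact lt_of_lt_of_le h2 h1

/-- large deviations limit for the Gilbert–Varshamov bound:
same as for the Rao bound but with `T_n/n → μ` and the inequality constraint
`∑ a_i θ_i ≤ μ`. -/
theorem gilbert_varshamov_large_deviations_limit
    (σ : ℕ) (hσ : 1 ≤ σ) (s : Fin σ → ℕ) (hs : ∀ i, 2 ≤ s i)
    (a : Fin σ → ℝ) (ha : ∀ i, 0 < a i) (hsuma : ∑ i, a i = 1)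
    (μ : ℝ) (hμ : μ ∈ Set.Ioo (0 : ℝ) 1)
    (l : ℕ → Fin σ → ℕ) (hl : ∀ n, ∑ i, l n i = n)
    (hla : ∀ i, Filter.Tendsto (fun n => (l n i : ℝ) / n) Filter.atTop (nhds (a i)))
    (b : ℕ → ℕ → Fin σ)
    (hb : ∀ n, ∀ j < n, ∀ i : Fin σ, b n j = i ↔
      (∑ k ∈ univ.filter (fun k => k < i), l n k) ≤ j ∧
        j < (∑ k ∈ univ.filter (fun k => k < i), l n k) + l n i)
    (T : ℕ → ℕ)
    (hT : Filter.Tendsto (fun n => (T n : ℝ) / n) Filter.atTop (nhds μ)) :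
    Filter.Tendsto (fun n : ℕ => (1 / (n : ℝ)) * Real.log
        (∑ x ∈ univ.filter (fun x : Fin n → Bool =>
            (∑ j, if x j then 1 else 0) ≤ T n),
          ∏ j : Fin n, (if x j then (s (b n j.val) : ℝ) - 1 else 1)))
      Filter.atTop
      (nhds (sSup {v : ℝ | ∃ θ : Fin σ → ℝ,
        (∀ i, θ i ∈ Set.Ioo (0 : ℝ) 1) ∧ (∑ i, a i * θ i) ≤ μ ∧
        v = ∑ i, a i * (θ i * Real.log ((s i : ℝ) - 1) + Hent (θ i))})) := by
  obtain ⟨hμ0, hμ1⟩ := hμ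
  obtain ⟨lam, hlam0, hgle, hcs⟩ := exists_lam σ hσ s hs a ha hsuma μ hμ0 hμ1
  have hgreat := sup_greatest σ s hs a ha μ lam hlam0 hgle hcs
  rw [hgreat.csSup_eq]
  have hs1 : ∀ i, (1:ℝ) ≤ (s i:ℝ) - 1 := by
    intro i
    have : (2:ℝ) ≤ (s i:ℝ) := by exact_mod_cast hs i
    linarith
  have h1c : ∀ i, (0:ℝ) < 1 + ((s i:ℝ)-1) * Real.exp (-lam) := by
    intro i
    have := hs1 i
    have := Real.exp_pos (-lam)
    nlinarith
  -- positivity of the sum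
  have hS1 : ∀ n : ℕ, (1:ℝ) ≤ (∑ x ∈ univ.filter (fun x : Fin n → Bool =>
            (∑ j, if x j then 1 else 0) ≤ T n),
          ∏ j : Fin n, (if x j then (s (b n j.val) : ℝ) - 1 else 1)) := by
    intro n
    have h0 := sum_lower n (l n) (b n) (hl n) (hb n) s hs (T n)
      (fun _ => 0) (fun i => Nat.zero_le _) (by simp)
    simpa using h0
  -- upper bound sequence tendsto
  have hu_tend : Tendsto (fun n : ℕ => lam * ((T n:ℝ)/(n:ℝ))
        + ∑ i, ((l n i:ℝ)/(n:ℝ)) * Real.log (1 + ((s i:ℝ)-1) * Real.exp (-lam)))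
      atTop (nhds (lam * μ + ∑ i, a i * Real.log (1 + ((s i:ℝ)-1) * Real.exp (-lam)))) := by
    apply Tendsto.add
    · exact hT.const_mul lam
    · exact tendsto_finset_sum _ (fun i _ => (hla i).mul_const _)
  apply tendsto_order.2
  constructor
  · -- lower bound branch
    intro x hx
    obtain ⟨θ0, hθ0io, hθ0μ, hθ0F⟩ := hgreat.1
    have hθ0pos : 0 < ∑ i, a i * θ0 i :=
      Finset.sum_pos (fun i _ => mul_pos (ha i) (hθ0io i).1) ⟨⟨0, hσ⟩, Finset.mem_univ _⟩
    have hδ : Tendsto (fun k : ℕ => 1/((k:ℝ)+2)) atTop (nhds 0) := by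
      have h1 : Tendsto (fun k : ℕ => ((k:ℝ)+2)) atTop atTop :=
        tendsto_atTop_add_const_right _ 2 tendsto_natCast_atTop_atTop
      simpa [one_div, Function.comp_def] using tendsto_inv_atTop_zero.comp h1
    have hFk : Tendsto (fun k : ℕ => ∑ i, a i *
          (((1 - 1/((k:ℝ)+2)) * θ0 i) * Real.log ((s i:ℝ)-1)
            + Hent ((1 - 1/((k:ℝ)+2)) * θ0 i))) atTop
        (nhds (lam * μ + ∑ i, a i * Real.log (1 + ((s i:ℝ)-1) * Real.exp (-lam)))) := by
      rw [hθ0F]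
      apply tendsto_finset_sum
      intro i _
      apply Tendsto.const_mul
      have hin : Tendsto (fun k : ℕ => (1 - 1/((k:ℝ)+2)) * θ0 i) atTop (nhds (θ0 i)) := by
        have h2 := ((tendsto_const_nhds : Tendsto (fun _ : ℕ => (1:ℝ)) atTop (nhds 1)).sub hδ).mul_const (θ0 i)
        simpa using h2
      exact (hin.mul_const _).add
        (((hent_contAt (hθ0io i).1 (hθ0io i).2).tendsto).comp hin)
    obtain ⟨k, hk⟩ := (hFk.eventually_const_lt hx).exists
    have hδ0 : (0:ℝ) < 1/((k:ℝ)+2) := by positivity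
    have hδ1 : 1/((k:ℝ)+2) < 1 := by
      rw [div_lt_one (by positivity)]
      have : (0:ℝ) ≤ (k:ℝ) := Nat.cast_nonneg k
      linarith
    have hev := lower_event σ s hs a ha μ l hl hla b hb T hT
      (fun i => (1 - 1/((k:ℝ)+2)) * θ0 i)
      (by
        intro i
        constructor
        · exact mul_pos (by linarith) (hθ0io i).1
        · have h3 : (1 - 1/((k:ℝ)+2)) * θ0 i < 1 * θ0 i :=
            mul_lt_mul_of_pos_right (by linarith) (hθ0io i).1
          rw [one_mul] at h3
          exact h3.trans (hθ0io i).2)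
      (by
        have heq : ∑ i, a i * ((1 - 1/((k:ℝ)+2)) * θ0 i)
            = (1 - 1/((k:ℝ)+2)) * ∑ i, a i * θ0 i := by
          rw [Finset.mul_sum]
          exact Finset.sum_congr rfl (fun i _ => by ring)
        rw [heq]
        nlinarith)
      x (by simpa using hk)
    exact hev
  · -- upper bound branch
    intro x hx
    filter_upwards [hu_tend.eventually_lt_const hx, eventually_ge_atTop 1] with n h1 h2
    have hn0 : (0:ℝ) < (n:ℝ) := by exact_mod_cast h2
    have hSU := sum_upper n (l n) (b n) (hl n) (hb n) s hs (T n) lam hlam0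
    have hSpos : (0:ℝ) < (∑ x ∈ univ.filter (fun x : Fin n → Bool =>
            (∑ j, if x j then 1 else 0) ≤ T n),
          ∏ j : Fin n, (if x j then (s (b n j.val) : ℝ) - 1 else 1)) :=
      lt_of_lt_of_le one_pos (hS1 n)
    have hprodne : ∀ i : Fin σ, ((1 + ((s i:ℝ)-1) * Real.exp (-lam)) ^ (l n i)) ≠ 0 :=
      fun i => pow_ne_zero _ (ne_of_gt (h1c i))
    have hloge : Real.log (∑ x ∈ univ.filter (fun x : Fin n → Bool =>
            (∑ j, if x j then 1 else 0) ≤ T n),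
          ∏ j : Fin n, (if x j then (s (b n j.val) : ℝ) - 1 else 1))
        ≤ lam * (T n:ℝ) + ∑ i, (l n i:ℝ) * Real.log (1 + ((s i:ℝ)-1) * Real.exp (-lam)) := by
      calc Real.log (∑ x ∈ univ.filter (fun x : Fin n → Bool =>
            (∑ j, if x j then 1 else 0) ≤ T n),
          ∏ j : Fin n, (if x j then (s (b n j.val) : ℝ) - 1 else 1))
          ≤ Real.log (Real.exp (lam * (T n:ℝ))
              * ∏ i, (1 + ((s i:ℝ)-1) * Real.exp (-lam)) ^ (l n i)) :=
            Real.log_le_log hSpos hSU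
        _ = lam * (T n:ℝ) + ∑ i, (l n i:ℝ) * Real.log (1 + ((s i:ℝ)-1) * Real.exp (-lam)) := by
            rw [Real.log_mul (Real.exp_ne_zero _) (Finset.prod_ne_zero_iff.mpr
              (fun i _ => hprodne i)), Real.log_exp,
              Real.log_prod (fun i _ => hprodne i)]
            congr 1
            exact Finset.sum_congr rfl (fun i _ => Real.log_pow _ _)
    calc (1/(n:ℝ)) * Real.log (∑ x ∈ univ.filter (fun x : Fin n → Bool =>
            (∑ j, if x j then 1 else 0) ≤ T n),
          ∏ j : Fin n, (if x j then (s (b n j.val) : ℝ) - 1 else 1))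
        ≤ (1/(n:ℝ)) * (lam * (T n:ℝ)
            + ∑ i, (l n i:ℝ) * Real.log (1 + ((s i:ℝ)-1) * Real.exp (-lam))) :=
          mul_le_mul_of_nonneg_left hloge (by positivity)
      _ = lam * ((T n:ℝ)/(n:ℝ))
            + ∑ i, ((l n i:ℝ)/(n:ℝ)) * Real.log (1 + ((s i:ℝ)-1) * Real.exp (-lam)) := by
          rw [mul_add, Finset.mul_sum]
          congr 1
          · ring
          · exact Finset.sum_congr rfl (fun i _ => by ring)
      _ < x := h1
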